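/- arXiv:2103.07238 — 4 statements merged into one kernel-verified Lean document; each statement's English description precedes it below -/
import Mathlib

section
/- Let f be a holomorphic map of the unit disc 𝔻 into its closure with ‖f‖_∞ ≤ 1, with f(0)=0, and which is not a rotation. Then for every 0 < r < 1 there exists a constant 0 < c = c(r,f) < 1 such that 1 − |z| ≤ c (1 − |f(z)|) for all z ∈ 𝔻 with |z| ≥ r. In fact one may take c = (1+|f'(0)| r)/(1+r). -/
open MeasureTheory Complex Metric Set Filter Topology

noncomputable section

/-- Normalized Lebesgue measure on the unit circle, via the parametrization `θ ↦ exp (θ * I)`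
of `∂𝔻` by `θ ∈ (0, 2π]`. -/
def circleMeasure : Measure ℝ :=
  (ENNReal.ofReal (2 * Real.pi)⁻¹) • (volume.restrict (Set.Ioc (0:ℝ) (2 * Real.pi)))

/-- The boundary point of the unit circle with angle `θ`. -/
def bpt (θ : ℝ) : ℂ := Complex.exp (θ * Complex.I)

/-- The radial limit of `f` at the boundary point `exp (θ * I)` (a junk value if the limit
does not exist). -/
def radialLimit (f : ℂ → ℂ) (θ : ℝ) : ℂ :=
  limUnder (nhdsWithin (1:ℝ) (Set.Iio 1)) (fun r : ℝ => f (r * bpt θ))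

/-- `f` is an inner function: a holomorphic self-map of the unit disc whose radial
limits exist and have modulus one at almost every boundary point. -/
def IsInner (f : ℂ → ℂ) : Prop :=
  DifferentiableOn ℂ f (ball 0 1) ∧ MapsTo f (ball 0 1) (ball 0 1) ∧
    ∀ᵐ θ ∂circleMeasure,
      Tendsto (fun r : ℝ => f (r * bpt θ)) (nhdsWithin (1:ℝ) (Set.Iio 1))
        (nhds (radialLimit f θ)) ∧ ‖radialLimit f θ‖ = 1

/-- `f` is a rotation of the unit disc: `f z = c z` on `𝔻` for some unimodular `c`. -/
def IsRotation (f : ℂ → ℂ) : Prop :=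
  ∃ c : ℂ, ‖c‖ = 1 ∧ ∀ z ∈ ball (0:ℂ) 1, f z = c * z

/-- The Poisson kernel `P(z, exp (θ * I)) = (1 - |z|²) / |exp (θ * I) - z|²`. -/
def pKernel (z : ℂ) (θ : ℝ) : ℝ := (1 - ‖z‖ ^ 2) / ‖bpt θ - z‖ ^ 2

/-- The function `F = ∑_{n≥1} aₙ fⁿ` (sum of a pointwise convergent series; junk if
it diverges). -/
def seriesFun (f : ℂ → ℂ) (a : ℕ → ℂ) (z : ℂ) : ℂ := ∑' n : ℕ, a (n + 1) * f^[n + 1] z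

/-- `f` is a finite Blaschke product (on the unit disc). -/
def IsFiniteBlaschke (f : ℂ → ℂ) : Prop :=
  ∃ (d : ℕ) (c : ℂ) (α : Fin d → ℂ), ‖c‖ = 1 ∧ (∀ k, α k ∈ ball (0:ℂ) 1) ∧
    ∀ z ∈ ball (0:ℂ) 1, f z = c * ∏ k, (z - α k) / (1 - (starRingEnd ℂ) (α k) * z)
lemma mob_id (w u : ℂ) :
    Complex.normSq (1 - (starRingEnd ℂ) w * u) - Complex.normSq (u - w) =
      (1 - Complex.normSq w) * (1 - Complex.normSq u) := by
  simp only [Complex.normSq_apply, Complex.sub_re, Complex.sub_im, Complex.mul_re,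
    Complex.mul_im, Complex.one_re, Complex.one_im, Complex.conj_re, Complex.conj_im]
  ring

lemma e1 (w u : ℂ) : Complex.normSq (u - w) =
    Complex.normSq u - 2 * ((starRingEnd ℂ) w * u).re + Complex.normSq w := by
  simp only [Complex.normSq_apply, Complex.sub_re, Complex.sub_im, Complex.mul_re,
    Complex.mul_im, Complex.conj_re, Complex.conj_im]
  ring

lemma e2 (w u : ℂ) : Complex.normSq (1 - (starRingEnd ℂ) w * u) =
    1 - 2 * ((starRingEnd ℂ) w * u).re + Complex.normSq w * Complex.normSq u := by
  simp only [Complex.normSq_apply, Complex.sub_re, Complex.sub_im, Complex.mul_re,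
    Complex.mul_im, Complex.one_re, Complex.one_im, Complex.conj_re, Complex.conj_im]
  ring

lemma maxmod {g : ℂ → ℂ} (hd : DifferentiableOn ℂ g (ball 0 1))
    (hle : ∀ z ∈ ball (0:ℂ) 1, ‖g z‖ ≤ 1) {z0 : ℂ} (hz0 : z0 ∈ ball (0:ℂ) 1)
    (h1 : ‖g z0‖ = 1) : ∀ z ∈ ball (0:ℂ) 1, g z = g z0 := by
  have hmax : IsMaxOn (norm ∘ g) (ball (0:ℂ) 1) z0 := by
    intro x hx
    simp only [Function.comp_apply, h1]
    exact hle x hx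
  exact fun z hz => Complex.eqOn_of_isPreconnected_of_isMaxOn_norm
    (convex_ball (0:ℂ) 1).isPreconnected isOpen_ball hd hz0 hmax hz


set_option maxHeartbeats 1000000 in
/-- **Lemma 2.1 (a).** Quantitative Denjoy–Wolff estimate: for `0 < r < 1` one has
`1 - |z| ≤ c (1 - |f z|)` for `r ≤ |z|`, with `c = (1 + |f'(0)| r)/(1 + r) ∈ (0,1)`. -/
theorem statement7 (f : ℂ → ℂ) (hd : DifferentiableOn ℂ f (ball 0 1))
    (hm : MapsTo f (ball 0 1) (closedBall 0 1)) (hf0 : f 0 = 0) (hrot : ¬ IsRotation f)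
    (r : ℝ) (hr0 : 0 < r) (hr1 : r < 1) :
    0 < (1 + ‖deriv f 0‖ * r) / (1 + r) ∧ (1 + ‖deriv f 0‖ * r) / (1 + r) < 1 ∧
      ∀ z ∈ ball (0:ℂ) 1, r ≤ ‖z‖ →
        1 - ‖z‖ ≤ ((1 + ‖deriv f 0‖ * r) / (1 + r)) * (1 - ‖f z‖) := by
  have h01 : (0:ℂ) ∈ ball (0:ℂ) 1 := by simp
  -- f maps the open ball into the open ball
  have hball : MapsTo f (ball 0 1) (ball 0 1) := by
    intro z hz
    have h1 : ‖f z‖ ≤ 1 := mem_closedBall_zero_iff.1 (hm hz)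
    rcases h1.lt_or_eq with h | h
    · exact mem_ball_zero_iff.2 h
    · exfalso
      have hcst := maxmod hd (fun w hw => mem_closedBall_zero_iff.1 (hm hw)) hz h
      have h0 := hcst 0 h01
      rw [hf0] at h0
      rw [← h0] at h; simp at h
  set g := dslope f 0 with hg
  have hgd : DifferentiableOn ℂ g (ball 0 1) :=
    (Complex.differentiableOn_dslope (isOpen_ball.mem_nhds h01)).2 hd
  have hmaps' : MapsTo f (ball 0 1) (ball (f 0) 1) := by rwa [hf0]
  have hgle : ∀ z ∈ ball (0:ℂ) 1, ‖g z‖ ≤ 1 := fun z hz => by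
    simpa using Complex.norm_dslope_le_div_of_mapsTo_ball hd (hmaps'.mono_right ball_subset_closedBall) hz
  have hfg : ∀ z : ℂ, z ≠ 0 → f z = z * g z := by
    intro z hz0
    rw [hg, dslope_of_ne _ hz0, slope_def_field, hf0]
    field_simp; ring
  have hglt : ∀ z ∈ ball (0:ℂ) 1, ‖g z‖ < 1 := by
    intro z hz
    rcases (hgle z hz).lt_or_eq with h | h
    · exact h
    · exfalso
      apply hrot
      have hcst := maxmod hgd hgle hz h
      refine ⟨g z, h, fun w hw => ?_⟩
      rcases eq_or_ne w 0 with rfl | hw0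
      · simp [hf0]
      · rw [hfg w hw0, hcst w hw]; ring
  have hderiv : deriv f 0 = g 0 := (dslope_same f 0).symm
  set a := ‖deriv f 0‖ with ha
  have ha0 : 0 ≤ a := norm_nonneg _
  have ha1 : a < 1 := by rw [ha, hderiv]; exact hglt 0 h01
  have hr1' : (0:ℝ) < 1 + r := by linarith
  refine ⟨by positivity, by rw [div_lt_one hr1']; nlinarith, ?_⟩
  intro z hz hrz
  set w := g 0 with hw
  have haw : ‖w‖ = a := by rw [ha, hderiv]
  set h : ℂ → ℂ := fun x => (g x - w) / (1 - (starRingEnd ℂ) w * g x) with hh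
  have hden : ∀ x ∈ ball (0:ℂ) 1, 1 - (starRingEnd ℂ) w * g x ≠ 0 := by
    intro x hx hc
    rw [sub_eq_zero] at hc
    have : (1:ℝ) = ‖(starRingEnd ℂ) w * g x‖ := by rw [← hc]; simp
    rw [norm_mul, RCLike.norm_conj, haw] at this
    nlinarith [hglt x hx, hgle x hx, norm_nonneg (g x)]
  have hhd : DifferentiableOn ℂ h (ball 0 1) := by
    apply DifferentiableOn.div
    · exact hgd.sub (differentiableOn_const _)
    · exact (differentiableOn_const _).sub ((differentiableOn_const _).mul hgd)
    · exact hden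
  have hhmaps : MapsTo h (ball (0:ℂ) 1) (ball (0:ℂ) 1) := by
    intro x hx
    rw [mem_ball_zero_iff, hh]
    simp only
    rw [norm_div, div_lt_one (norm_pos_iff.2 (hden x hx))]
    have hga : Complex.normSq (g x) < 1 := by
      rw [Complex.normSq_eq_norm_sq]
      nlinarith [hglt x hx, norm_nonneg (g x)]
    have hwa : Complex.normSq w < 1 := by
      rw [Complex.normSq_eq_norm_sq, haw]; nlinarith
    have hwa0 : 0 ≤ Complex.normSq w := Complex.normSq_nonneg w
    have hga0 : 0 ≤ Complex.normSq (g x) := Complex.normSq_nonneg (g x)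
    have hlt : Complex.normSq (g x - w) < Complex.normSq (1 - (starRingEnd ℂ) w * g x) := by
      nlinarith [mob_id w (g x)]
    have h2 : ‖g x - w‖ ^ 2 < ‖1 - (starRingEnd ℂ) w * g x‖ ^ 2 := by
      rw [Complex.sq_norm, Complex.sq_norm]
      exact hlt
    nlinarith [norm_nonneg (g x - w), norm_nonneg (1 - (starRingEnd ℂ) w * g x)]
  have hh0 : h 0 = 0 := by simp [hh, hw]
  have hzball : ‖z‖ < 1 := by rwa [← mem_ball_zero_iff]
  have hsch : ‖h z‖ ≤ ‖z‖ :=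
    Complex.norm_le_norm_of_mapsTo_ball hhd (hhmaps.mono_right ball_subset_closedBall) hh0 hzball
  have hdz := hden z hz
  have hdzpos : 0 < ‖1 - (starRingEnd ℂ) w * g z‖ := norm_pos_iff.2 hdz
  have hnum : ‖g z - w‖ ≤ ‖z‖ * ‖1 - (starRingEnd ℂ) w * g z‖ := by
    have h3 : ‖h z‖ ≤ ‖z‖ := hsch
    rw [hh] at h3
    simp only at h3
    rw [norm_div, div_le_iff₀ hdzpos] at h3
    exact h3
  set s := ‖z‖ with hs
  set G := ‖g z‖ with hG
  have hsq : Complex.normSq (g z - w) ≤ s ^ 2 * Complex.normSq (1 - (starRingEnd ℂ) w * g z) := by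
    have h4 := mul_le_mul hnum hnum (norm_nonneg _) (by positivity)
    rw [← Complex.sq_norm, ← Complex.sq_norm]
    nlinarith [h4]
  rw [e1 w (g z), e2 w (g z)] at hsq
  have hnw : Complex.normSq w = a ^ 2 := by
    rw [Complex.normSq_eq_norm_sq, haw]
  have hnG : Complex.normSq (g z) = G ^ 2 := by
    rw [Complex.normSq_eq_norm_sq]
  rw [hnw, hnG] at hsq
  have hxle : ((starRingEnd ℂ) w * g z).re ≤ a * G := by
    calc ((starRingEnd ℂ) w * g z).re ≤ ‖(starRingEnd ℂ) w * g z‖ :=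
        Complex.re_le_norm _
    _ = a * G := by
        rw [norm_mul, RCLike.norm_conj, haw]
  have hs1 : s < 1 := by rwa [hs, ← mem_ball_zero_iff]
  have hG0 : 0 ≤ G := norm_nonneg _
  have hG1 : G < 1 := hglt z hz
  have hs0 : 0 < s := lt_of_lt_of_le hr0 hrz
  have hs2 : (0:ℝ) ≤ 1 - s ^ 2 := by nlinarith
  have hsa1 : (0:ℝ) < 1 - s * a := by nlinarith
  have hsa2 : (0:ℝ) < 1 + s * a := by nlinarith
  have hq : (G * (1 + s * a) - (s + a)) * (G * (1 - s * a) - (a - s)) ≤ 0 := by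
    nlinarith [hsq, mul_nonneg hs2 (sub_nonneg.2 hxle)]
  have hkey : G * (1 + s * a) ≤ s + a := by
    by_contra hc
    push_neg at hc
    have h2 : a - s < G * (1 - s * a) := by
      nlinarith [mul_pos (sub_pos.2 hc) hsa1, mul_nonneg hs0.le (by nlinarith : (0:ℝ) ≤ 1 - a ^ 2)]
    linarith [mul_pos (sub_pos.2 hc) (sub_pos.2 h2)]
  have hz0 : z ≠ 0 := norm_pos_iff.mp hs0
  have hfz : ‖f z‖ = s * G := by rw [hfg z hz0, norm_mul]
  rw [hfz, div_mul_eq_mul_div, le_div_iff₀ hr1']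
  have hfin : ((1 - s) * (1 + r)) * (1 + s * a) ≤ ((1 + a * r) * (1 - s * G)) * (1 + s * a) := by
    nlinarith [mul_le_mul_of_nonneg_left hkey hs0.le,
      mul_nonneg (mul_nonneg (sub_nonneg.2 hs1.le) (sub_nonneg.2 hrz)) (sub_nonneg.2 ha1.le),
      mul_nonneg (mul_nonneg ha0 hr0.le)
        (sub_nonneg.2 (by nlinarith [mul_le_mul_of_nonneg_left hkey hs0.le] : s * G * (1 + s * a) ≤ s * (s + a)))]
  exact (mul_le_mul_iff_of_pos_right hsa2).1 hfin
end
end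

section
/- Let f be a holomorphic map of the unit disc 𝔻 into its closure with ‖f‖_∞ ≤ 1, with f(0)=0, which is not a rotation, and assume f'(0) ≠ 0. Then there exists 0 < r₀ = r₀(f) < 1 such that for all n ≥ 1 and all z with |z| ≤ r₀ one has |f^n(z)| ≤ r₀^{-1} |f'(0)|^n |z|, where f^n denotes the n-th iterate of f. -/
open MeasureTheory Complex Metric Set Filter Topology

noncomputable section

lemma moebius_norm_le (a w : ℂ) (ha : ‖a‖ ≤ 1) (hw : ‖w‖ ≤ 1) :
    ‖w - a‖ ≤ ‖1 - (starRingEnd ℂ) a * w‖ := by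
  have ha' : Complex.normSq a ≤ 1 := by
    rw [Complex.normSq_eq_norm_sq]; nlinarith [norm_nonneg a, ha]
  have hw' : Complex.normSq w ≤ 1 := by
    rw [Complex.normSq_eq_norm_sq]; nlinarith [norm_nonneg w, hw]
  have key : Complex.normSq (w - a) ≤ Complex.normSq (1 - (starRingEnd ℂ) a * w) := by
    simp only [Complex.normSq_apply, Complex.sub_re, Complex.sub_im, Complex.mul_re,
      Complex.mul_im, Complex.conj_re, Complex.conj_im, Complex.one_re, Complex.one_im,
      Complex.normSq_apply] at *
    nlinarith [mul_nonneg (sub_nonneg.2 ha') (sub_nonneg.2 hw')]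
  simpa only [Complex.norm_def] using Real.sqrt_le_sqrt key

lemma eq_mul_dslope (f : ℂ → ℂ) (hf0 : f 0 = 0) (z : ℂ) : f z = z * dslope f 0 z := by
  rcases eq_or_ne z 0 with rfl | hz
  · simp [hf0]
  · rw [dslope_of_ne _ hz, slope_def_field, hf0]
    field_simp
    ring

lemma aux_schwarz (f : ℂ → ℂ) (hd : DifferentiableOn ℂ f (ball 0 1))
    (hm : MapsTo f (ball 0 1) (closedBall 0 1)) (hf0 : f 0 = 0) :
    ∀ z ∈ ball (0:ℂ) 1, ‖dslope f 0 z‖ ≤ 1 := by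
  intro z hz
  have h : ∀ R : ℝ, 1 < R → ‖dslope f 0 z‖ ≤ R := by
    intro R hR
    have hmaps : MapsTo f (ball 0 1) (closedBall (f 0) R) := fun w hw => by
      simp only [hf0, mem_closedBall, dist_zero_right]
      exact le_of_lt (lt_of_le_of_lt (by simpa [dist_zero_right] using hm hw) hR)
    simpa using norm_dslope_le_div_of_mapsTo_ball hd hmaps hz
  exact le_of_forall_gt_imp_ge_of_dense h

/-- **Lemma 2.1 (b).** If moreover `f'(0) ≠ 0`, there is `0 < r₀ < 1` with
`|fⁿ(z)| ≤ r₀⁻¹ |f'(0)|ⁿ |z|` for all `n ≥ 1` and `|z| ≤ r₀`. -/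
theorem statement8 (f : ℂ → ℂ) (hd : DifferentiableOn ℂ f (ball 0 1))
    (hm : MapsTo f (ball 0 1) (closedBall 0 1)) (hf0 : f 0 = 0) (hrot : ¬ IsRotation f)
    (hder : deriv f 0 ≠ 0) :
    ∃ r₀ : ℝ, 0 < r₀ ∧ r₀ < 1 ∧ ∀ n : ℕ, 1 ≤ n → ∀ z : ℂ, ‖z‖ ≤ r₀ →
      ‖f^[n] z‖ ≤ r₀⁻¹ * ‖deriv f 0‖ ^ n * ‖z‖ := by
  set a := deriv f 0 with ha_def
  set g := dslope f 0 with hg_def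
  have hg_diff : DifferentiableOn ℂ g (ball 0 1) :=
    (differentiableOn_dslope (isOpen_ball.mem_nhds (mem_ball_self one_pos))).mpr hd
  have hg_le : ∀ z ∈ ball (0:ℂ) 1, ‖g z‖ ≤ 1 := aux_schwarz f hd hm hf0
  have hg0 : g 0 = a := dslope_same f 0
  have hα1 : ‖a‖ ≤ 1 := by
    have := hg_le 0 (mem_ball_self one_pos); rwa [hg0] at this
  have hαlt : ‖a‖ < 1 := by
    rcases hα1.lt_or_eq with hlt | heq
    · exact hlt
    · exfalso; apply hrot
      have hmax : IsMaxOn (norm ∘ g) (ball 0 1) 0 := fun z hz => by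
        simp only [Function.comp, mem_setOf_eq, hg0, heq]
        exact hg_le z hz
      have heqOn := Complex.eqOn_of_isPreconnected_of_isMaxOn_norm
        (convex_ball (0:ℂ) 1).isPreconnected isOpen_ball hg_diff (mem_ball_self one_pos) hmax
      refine ⟨a, heq, fun z hz => ?_⟩
      have hz' := heqOn hz
      simp only [Function.const_apply, hg0] at hz'
      rw [eq_mul_dslope f hf0 z, ← hg_def, hz', mul_comm]
  have hden : ∀ z ∈ ball (0:ℂ) 1, 1 - (starRingEnd ℂ) a * g z ≠ 0 := by
    intro z hz hzero
    have h1 : (1:ℂ) = (starRingEnd ℂ) a * g z := sub_eq_zero.mp hzero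
    have h2 : (1:ℝ) = ‖a‖ * ‖g z‖ := by
      calc (1:ℝ) = ‖(starRingEnd ℂ) a * g z‖ := by rw [← h1]; simp
        _ = ‖a‖ * ‖g z‖ := by rw [norm_mul, RCLike.norm_conj]
    nlinarith [hg_le z hz, norm_nonneg a, norm_nonneg (g z)]
  set h : ℂ → ℂ := fun z => (g z - a) / (1 - (starRingEnd ℂ) a * g z) with hh_def
  have hh_diff : DifferentiableOn ℂ h (ball 0 1) :=
    (hg_diff.sub (differentiableOn_const a)).div
      ((differentiableOn_const 1).sub ((differentiableOn_const _).mul hg_diff)) hden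
  have hh0 : h 0 = 0 := by simp [hh_def, hg0]
  have hh_maps : MapsTo h (ball 0 1) (closedBall 0 1) := fun z hz => by
    simp only [mem_closedBall, dist_zero_right, hh_def, norm_div]
    exact div_le_one_of_le₀ (moebius_norm_le a (g z) hαlt.le (hg_le z hz)) (norm_nonneg _)
  have hh_le : ∀ z ∈ ball (0:ℂ) 1, ‖h z‖ ≤ ‖z‖ := fun z hz => by
    rw [eq_mul_dslope h hh0 z, norm_mul]
    have := aux_schwarz h hh_diff hh_maps hh0 z hz
    nlinarith [norm_nonneg z]
  have key : ∀ z ∈ ball (0:ℂ) 1, ‖f z‖ ≤ (‖a‖ + 2 * ‖z‖) * ‖z‖ := by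
    intro z hz
    have hgz : ‖g z - a‖ ≤ 2 * ‖z‖ := by
      have hEq : g z - a = h z * (1 - (starRingEnd ℂ) a * g z) := by
        rw [hh_def]; exact (div_mul_cancel₀ _ (hden z hz)).symm
      have hD : ‖1 - (starRingEnd ℂ) a * g z‖ ≤ 2 := by
        calc ‖1 - (starRingEnd ℂ) a * g z‖ ≤ ‖(1:ℂ)‖ + ‖(starRingEnd ℂ) a * g z‖ :=
              norm_sub_le _ _
          _ = 1 + ‖a‖ * ‖g z‖ := by rw [norm_one, norm_mul, RCLike.norm_conj]
          _ ≤ 2 := by nlinarith [hg_le z hz, norm_nonneg a, norm_nonneg (g z)]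
      calc ‖g z - a‖ = ‖h z‖ * ‖1 - (starRingEnd ℂ) a * g z‖ := by rw [hEq, norm_mul]
        _ ≤ ‖z‖ * 2 := mul_le_mul (hh_le z hz) hD (norm_nonneg _) (norm_nonneg _)
        _ = 2 * ‖z‖ := by ring
    have hgz2 : ‖g z‖ ≤ ‖a‖ + 2 * ‖z‖ := by
      calc ‖g z‖ = ‖a + (g z - a)‖ := by ring_nf
        _ ≤ ‖a‖ + ‖g z - a‖ := norm_add_le _ _
        _ ≤ ‖a‖ + 2 * ‖z‖ := by linarith
    calc ‖f z‖ = ‖z‖ * ‖g z‖ := by rw [eq_mul_dslope f hf0 z, norm_mul]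
      _ ≤ ‖z‖ * (‖a‖ + 2 * ‖z‖) := by
          exact mul_le_mul_of_nonneg_left hgz2 (norm_nonneg z)
      _ = (‖a‖ + 2 * ‖z‖) * ‖z‖ := by ring
  -- numeric part
  have hα0 : 0 < ‖a‖ := norm_pos_iff.mpr hder
  set α := ‖a‖ with hα_def
  set q : ℝ := (1 + α) / 2 with hq_def
  have hq1 : q < 1 := by rw [hq_def]; linarith
  have hq0 : 0 < q := by rw [hq_def]; linarith
  set β : ℝ := 2 / α with hβ_def
  have hβ0 : 0 < β := by rw [hβ_def]; positivity
  have hlog2 : 0 < Real.log 2 := Real.log_pos one_lt_two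
  set r₀ : ℝ := min ((1 - α) / 4) (min (1 / 2) ((1 - q) * Real.log 2 / β)) with hr_def
  have hr0 : 0 < r₀ := by
    apply lt_min (by linarith)
    exact lt_min one_half_pos (div_pos (mul_pos (by linarith) hlog2) hβ0)
  have hrhalf : r₀ ≤ 1 / 2 := (min_le_right _ _).trans (min_le_left _ _)
  have hr1 : r₀ < 1 := by linarith
  have hrq : α + 2 * r₀ ≤ q := by
    have h4 : r₀ ≤ (1 - α) / 4 := min_le_left _ _
    rw [hq_def]; linarith
  have hrlog : β * r₀ / (1 - q) ≤ Real.log 2 := by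
    have h1 : r₀ ≤ (1 - q) * Real.log 2 / β := (min_le_right _ _).trans (min_le_right _ _)
    rw [div_le_iff₀ (by linarith : (0:ℝ) < 1 - q)]
    calc β * r₀ ≤ β * ((1 - q) * Real.log 2 / β) := by nlinarith
      _ = Real.log 2 * (1 - q) := by field_simp
  have hαβ : α * β = 2 := by rw [hβ_def]; field_simp
  clear hα1 hαlt hg_diff hg_le hg0 hden hh_diff hh0 hh_maps hh_le hd hm hrot hder hf0
  clear_value h g a α q β r₀
  clear ha_def hg_def hh_def hα_def hq_def hβ_def hr_def
  refine ⟨r₀, hr0, hr1, ?_⟩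
  intro n _ z hz
  have main : ∀ m : ℕ, ‖f^[m] z‖ ≤ r₀ * q ^ m ∧
      ‖f^[m] z‖ ≤ α ^ m * Real.exp (β * r₀ * (1 - q ^ m) / (1 - q)) * ‖z‖ := by
    intro m
    induction m with
    | zero =>
      constructor
      · simpa using hz
      · have he : β * r₀ * (1 - q ^ 0) / (1 - q) = 0 := by norm_num
        rw [Function.iterate_zero_apply, he, pow_zero, Real.exp_zero, one_mul, one_mul]
    | succ n ih =>
      obtain ⟨ih1, ih2⟩ := ih
      set w := f^[n] z with hw_def
      have hqpow0 : 0 < q ^ n := pow_pos hq0 n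
      have hqpow1 : q ^ n ≤ 1 := pow_le_one₀ hq0.le hq1.le
      have hw1 : ‖w‖ < 1 := by nlinarith
      have hstep : ‖f w‖ ≤ (α + 2 * ‖w‖) * ‖w‖ :=
        key w (by simpa [mem_ball, dist_zero_right] using hw1)
      have hiter : f^[n + 1] z = f w := by rw [hw_def, Function.iterate_succ_apply']
      have hwn : 0 ≤ ‖w‖ := norm_nonneg w
      constructor
      · rw [hiter]
        calc ‖f w‖ ≤ (α + 2 * ‖w‖) * ‖w‖ := hstep
          _ ≤ q * (r₀ * q ^ n) := by
              have hf1 : α + 2 * ‖w‖ ≤ q := by nlinarith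
              exact mul_le_mul hf1 ih1 hwn hq0.le
          _ = r₀ * q ^ (n + 1) := by ring
      · rw [hiter]
        have e1 : (α + 2 * ‖w‖) * ‖w‖ = α * (1 + β * ‖w‖) * ‖w‖ := by
          linear_combination (-(‖w‖ * ‖w‖)) * hαβ
        have h2 : 1 + β * ‖w‖ ≤ Real.exp (β * (r₀ * q ^ n)) := by
          have hle : 1 + β * ‖w‖ ≤ 1 + β * (r₀ * q ^ n) := by nlinarith
          linarith [Real.add_one_le_exp (β * (r₀ * q ^ n))]
        have expo : β * r₀ * (1 - q ^ n) / (1 - q) + β * (r₀ * q ^ n)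
            = β * r₀ * (1 - q ^ (n + 1)) / (1 - q) := by
          have hq' : (1:ℝ) - q ≠ 0 := by linarith
          rw [pow_succ]
          field_simp
          ring
        calc ‖f w‖ ≤ α * (1 + β * ‖w‖) * ‖w‖ := by rw [← e1]; exact hstep
          _ ≤ α * Real.exp (β * (r₀ * q ^ n)) *
              (α ^ n * Real.exp (β * r₀ * (1 - q ^ n) / (1 - q)) * ‖z‖) := by
            apply mul_le_mul _ ih2 hwn (by positivity)
            exact mul_le_mul_of_nonneg_left h2 hα0.le
          _ = α ^ (n + 1) * Real.exp (β * r₀ * (1 - q ^ (n + 1)) / (1 - q)) * ‖z‖ := by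
            rw [← expo, Real.exp_add, pow_succ]; ring
  obtain ⟨-, h2⟩ := main n
  have hE : Real.exp (β * r₀ * (1 - q ^ n) / (1 - q)) ≤ 2 := by
    have hmono : β * r₀ * (1 - q ^ n) / (1 - q) ≤ β * r₀ / (1 - q) := by
      apply (div_le_div_iff_of_pos_right (by linarith : (0:ℝ) < 1 - q)).mpr
      nlinarith [mul_nonneg (mul_pos hβ0 hr0).le (pow_pos hq0 n).le]
    calc Real.exp (β * r₀ * (1 - q ^ n) / (1 - q)) ≤ Real.exp (Real.log 2) :=
          Real.exp_le_exp.mpr (hmono.trans hrlog)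
      _ = 2 := Real.exp_log two_pos
  have hrinv : (2:ℝ) ≤ r₀⁻¹ := by
    rw [show (2:ℝ) = (1/2 : ℝ)⁻¹ by norm_num]
    exact inv_anti₀ hr0 hrhalf
  calc ‖f^[n] z‖ ≤ α ^ n * Real.exp (β * r₀ * (1 - q ^ n) / (1 - q)) * ‖z‖ := h2
    _ ≤ α ^ n * 2 * ‖z‖ := by
        apply mul_le_mul_of_nonneg_right _ (norm_nonneg z)
        exact mul_le_mul_of_nonneg_left hE (by positivity)
    _ ≤ r₀⁻¹ * α ^ n * ‖z‖ := by
        have hp : (0:ℝ) ≤ α ^ n * ‖z‖ := by positivity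
        nlinarith [hp]
end
end

section
/- Let f be a holomorphic map of the unit disc 𝔻 into its closure with ‖f‖_∞ ≤ 1, with f(0)=0, which is not a rotation. Then there exist constants 0 < r₀ = r₀(f) < 1 and 0 < c₀ = c₀(f) < 1 such that |f^n(z)| ≤ r₀^{-1} c₀^n |z| for every n ≥ 1 and every z with |z| ≤ r₀, where f^n denotes the n-th iterate of f. -/
open MeasureTheory Complex Metric Set Filter Topology

noncomputable section

/-- **Corollary 2.2.** There are `0 < r₀ < 1` and `0 < c₀ < 1` such that
`|fⁿ(z)| ≤ r₀⁻¹ c₀ⁿ |z|` for all `n ≥ 1` and `|z| ≤ r₀`. -/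
theorem statement10 (f : ℂ → ℂ) (hd : DifferentiableOn ℂ f (ball 0 1))
    (hm : MapsTo f (ball 0 1) (closedBall 0 1)) (hf0 : f 0 = 0) (hrot : ¬ IsRotation f) :
    ∃ r₀ c₀ : ℝ, 0 < r₀ ∧ r₀ < 1 ∧ 0 < c₀ ∧ c₀ < 1 ∧
      ∀ n : ℕ, 1 ≤ n → ∀ z : ℂ, ‖z‖ ≤ r₀ → ‖f^[n] z‖ ≤ r₀⁻¹ * c₀ ^ n * ‖z‖ := by
  -- f maps into the open ball
  have hmo : MapsTo f (ball 0 1) (ball (f 0) 1) := by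
    rw [hf0]
    intro z hz
    rcases lt_or_eq_of_le (by simpa using hm hz : ‖f z‖ ≤ 1) with h | h
    · simpa using h
    · exfalso
      have hmax : IsMaxOn (norm ∘ f) (ball (0:ℂ) 1) z := by
        intro w hw; simpa [h] using (by simpa using hm hw : ‖f w‖ ≤ 1)
      have := Complex.eqOn_of_isPreconnected_of_isMaxOn_norm
        (convex_ball (0:ℂ) 1).isPreconnected isOpen_ball hd hz hmax
        (mem_ball_self one_pos)
      simp only [Function.const_apply] at this
      rw [hf0] at this
      rw [← this] at h
      simp at h
  -- Schwarz: ‖dslope f 0 z‖ < 1 on the ball (strict, since f is not a rotation)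
  have hds : ∀ z ∈ ball (0:ℂ) 1, ‖dslope f 0 z‖ < 1 := by
    intro z hz
    rcases lt_or_eq_of_le (by simpa using
      Complex.norm_dslope_le_div_of_mapsTo_ball hd (hmo.mono_right ball_subset_closedBall) hz) with h | h
    · exact h
    · exfalso
      apply hrot
      refine ⟨dslope f 0 z, h, fun w hw => ?_⟩
      have := Complex.affine_of_mapsTo_ball_of_exists_norm_dslope_eq_div hd (hmo.mono_right ball_subset_closedBall) hz
        (by simpa using h) hw
      simpa [hf0, mul_comm] using this
  -- dslope is continuous on the ball
  have hdc : ContinuousOn (dslope f 0) (ball (0:ℂ) 1) :=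
    ((differentiableOn_dslope (isOpen_ball.mem_nhds (mem_ball_self one_pos))).mpr
      hd).continuousOn
  -- max of ‖dslope f 0‖ on closedBall 0 (1/2)
  have hsub : closedBall (0:ℂ) (1/2) ⊆ ball 0 1 := by
    apply closedBall_subset_ball; norm_num
  obtain ⟨x, hx, hxmax⟩ := (isCompact_closedBall (0:ℂ) (1/2)).exists_isMaxOn
    ⟨0, by simp⟩ ((hdc.mono hsub).norm)
  set c₀ : ℝ := max ‖dslope f 0 x‖ (1/2) with hc₀
  have hc₀1 : c₀ < 1 := max_lt (hds x (hsub hx)) (by norm_num)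
  have hc₀0 : 0 < c₀ := lt_max_of_lt_right (by norm_num)
  -- one-step estimate
  have step : ∀ z : ℂ, ‖z‖ ≤ 1/2 → ‖f z‖ ≤ c₀ * ‖z‖ := by
    intro z hz
    have hzb : z ∈ closedBall (0:ℂ) (1/2) := by simpa using hz
    have hfz : f z = dslope f 0 z * z := by
      rcases eq_or_ne z 0 with rfl | hne
      · simp [hf0]
      · rw [dslope_of_ne _ hne]; rw [slope_def_field, hf0, sub_zero, sub_zero, div_mul_cancel₀ _ hne]
    rw [hfz, norm_mul]
    exact mul_le_mul_of_nonneg_right (le_trans (hxmax hzb) (le_max_left _ _)) (norm_nonneg z)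
  -- iterate
  refine ⟨1/2, c₀, by norm_num, by norm_num, hc₀0, hc₀1, ?_⟩
  have key : ∀ n : ℕ, ∀ z : ℂ, ‖z‖ ≤ 1/2 → ‖f^[n] z‖ ≤ c₀ ^ n * ‖z‖ := by
    intro n
    induction n with
    | zero => intro z hz; simp
    | succ n ih =>
      intro z hz
      have h1 : ‖f^[n] z‖ ≤ c₀ ^ n * ‖z‖ := ih z hz
      have h2 : ‖f^[n] z‖ ≤ 1/2 := by
        refine le_trans h1 (le_trans ?_ hz)
        calc c₀ ^ n * ‖z‖ ≤ 1 * ‖z‖ :=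
          mul_le_mul_of_nonneg_right (pow_le_one₀ hc₀0.le hc₀1.le) (norm_nonneg z)
        _ = ‖z‖ := one_mul _
      rw [Function.iterate_succ_apply']
      calc ‖f (f^[n] z)‖ ≤ c₀ * ‖f^[n] z‖ := step _ h2
        _ ≤ c₀ * (c₀ ^ n * ‖z‖) := mul_le_mul_of_nonneg_left h1 hc₀0.le
        _ = c₀ ^ (n + 1) * ‖z‖ := by ring
  intro n hn z hz
  calc ‖f^[n] z‖ ≤ c₀ ^ n * ‖z‖ := key n z hz
    _ ≤ (1/2 : ℝ)⁻¹ * c₀ ^ n * ‖z‖ := by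
      apply mul_le_mul_of_nonneg_right _ (norm_nonneg z)
      nlinarith [pow_nonneg hc₀0.le n]

end
end

section
/- Let f be an inner function with f(0)=0 which is not a rotation, and let (a_n) be a bounded sequence of complex numbers. Then the series F(z) = ∑_{n=1}^∞ a_n f^n(z) converges for every z ∈ 𝔻 and defines a function in the Bloch space, and there exists a constant C = C(f) > 0 such that ‖F‖_ℬ = sup_{z∈𝔻} (1−|z|²)|F'(z)| ≤ C · sup_{n≥1} |a_n|. -/
open MeasureTheory Complex Metric Set Filter Topology

noncomputable section

namespace Thm43

lemma normSq' (w : ℂ) : ‖w‖^2 = Complex.normSq w := by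
  rw [Complex.sq_norm]

/-- The Möbius map `z ↦ (b - z)/(1 - b̄ z)`. -/
def mb (b z : ℂ) : ℂ := (b - z) / (1 - (starRingEnd ℂ) b * z)

lemma mb_key (b z : ℂ) :
    ‖1 - (starRingEnd ℂ) b * z‖^2 - ‖b - z‖^2 = (1 - ‖b‖^2) * (1 - ‖z‖^2) := by
  simp only [normSq', Complex.normSq_apply, Complex.sub_re, Complex.sub_im, Complex.mul_re,
    Complex.mul_im, Complex.one_re, Complex.one_im, Complex.conj_re, Complex.conj_im]
  ring

lemma mb_denom_pos {b z : ℂ} (hb : ‖b‖ < 1) (hz : ‖z‖ < 1) :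
    0 < ‖1 - (starRingEnd ℂ) b * z‖ := by
  have h := mb_key b z
  have hp : 0 < (1 - ‖b‖^2) * (1 - ‖z‖^2) := by
    have h1 : ‖b‖^2 < 1 := by nlinarith [norm_nonneg b]
    have h2 : ‖z‖^2 < 1 := by nlinarith [norm_nonneg z]
    nlinarith
  have hdsq : 0 < ‖1 - (starRingEnd ℂ) b * z‖^2 := by nlinarith [sq_nonneg ‖b - z‖]
  rcases (norm_nonneg (1 - (starRingEnd ℂ) b * z)).eq_or_lt with h0 | h0
  · rw [← h0] at hdsq; simp at hdsq
  · exact h0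

lemma mb_denom_ne {b z : ℂ} (hb : ‖b‖ < 1) (hz : ‖z‖ < 1) :
    1 - (starRingEnd ℂ) b * z ≠ 0 :=
  norm_pos_iff.1 (mb_denom_pos hb hz)

lemma norm_mb_lt_one {b z : ℂ} (hb : ‖b‖ < 1) (hz : ‖z‖ < 1) : ‖mb b z‖ < 1 := by
  have h := mb_key b z
  have hd := mb_denom_pos hb hz
  rw [mb, norm_div, div_lt_one hd]
  have hp : 0 < (1 - ‖b‖^2) * (1 - ‖z‖^2) := by
    have h1 : ‖b‖^2 < 1 := by nlinarith [norm_nonneg b]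
    have h2 : ‖z‖^2 < 1 := by nlinarith [norm_nonneg z]
    nlinarith
  have hlt : ‖b - z‖^2 < ‖1 - (starRingEnd ℂ) b * z‖^2 := by nlinarith
  exact lt_of_pow_lt_pow_left₀ 2 hd.le hlt

lemma one_sub_mb_sq {b z : ℂ} (hb : ‖b‖ < 1) (hz : ‖z‖ < 1) :
    1 - ‖mb b z‖^2 =
      (1 - ‖b‖^2) * (1 - ‖z‖^2) / ‖1 - (starRingEnd ℂ) b * z‖^2 := by
  have hd := mb_denom_pos hb hz
  have hd2 : ‖1 - (starRingEnd ℂ) b * z‖^2 ≠ 0 := by positivity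
  have hmb : ‖mb b z‖^2 * ‖1 - (starRingEnd ℂ) b * z‖^2 = ‖b - z‖^2 := by
    rw [mb, norm_div, div_pow]
    rw [div_mul_cancel₀ _ hd2]
  rw [eq_div_iff hd2]
  have h := mb_key b z
  linarith [h, hmb]

lemma hasDerivAt_mb (b : ℂ) {z : ℂ} (h : 1 - (starRingEnd ℂ) b * z ≠ 0) :
    HasDerivAt (mb b) (((starRingEnd ℂ) b * b - 1) / (1 - (starRingEnd ℂ) b * z)^2) z := by
  have h1 : HasDerivAt (fun z : ℂ => b - z) (-1) z := (hasDerivAt_id z).const_sub b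
  have h2 : HasDerivAt (fun z : ℂ => 1 - (starRingEnd ℂ) b * z) (-((starRingEnd ℂ) b * 1)) z :=
    ((hasDerivAt_id z).const_mul ((starRingEnd ℂ) b)).const_sub 1
  have h3 := h1.div h2 h
  rw [show (starRingEnd ℂ) b * b - 1
      = (-1 * (1 - (starRingEnd ℂ) b * z) - (b - z) * -((starRingEnd ℂ) b * 1)) by ring]
  exact h3

lemma mb_self (b : ℂ) : mb b b = 0 := by simp [mb]

lemma mb_zero (b : ℂ) : mb b 0 = b := by simp [mb]


end Thm43

namespace Thm43

lemma normSq'' (w : ℂ) : (starRingEnd ℂ) w * w = ((‖w‖^2 : ℝ) : ℂ) := by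
  rw [mul_comm, Complex.mul_conj]
  norm_cast
  rw [Complex.sq_norm]

/-- Schwarz–Pick lemma for the derivative. -/
lemma sp_deriv {f : ℂ → ℂ} (hd : DifferentiableOn ℂ f (ball 0 1))
    (hm : MapsTo f (ball 0 1) (ball 0 1)) {w : ℂ} (hw : w ∈ ball (0:ℂ) 1) :
    (1 - ‖w‖^2) * ‖deriv f w‖ ≤ 1 - ‖f w‖^2 := by
  have hw1 : ‖w‖ < 1 := mem_ball_zero_iff.1 hw
  have hfw1 : ‖f w‖ < 1 := mem_ball_zero_iff.1 (hm hw)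
  have hmbw : MapsTo (mb w) (ball (0:ℂ) 1) (ball (0:ℂ) 1) := fun y hy =>
    mem_ball_zero_iff.2 (norm_mb_lt_one hw1 (mem_ball_zero_iff.1 hy))
  have hmbf : MapsTo (mb (f w)) (ball (0:ℂ) 1) (ball (0:ℂ) 1) := fun y hy =>
    mem_ball_zero_iff.2 (norm_mb_lt_one hfw1 (mem_ball_zero_iff.1 hy))
  set h : ℂ → ℂ := fun y => mb (f w) (f (mb w y)) with hh
  have h0 : h 0 = 0 := by rw [hh]; simp only [mb_zero, mb_self]
  -- differentiability of h on the ball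
  have hdh : DifferentiableOn ℂ h (ball (0:ℂ) 1) := by
    intro y hy
    have hy1 : ‖y‖ < 1 := mem_ball_zero_iff.1 hy
    have d1 : HasDerivAt (mb w) _ y := hasDerivAt_mb w (mb_denom_ne hw1 hy1)
    have hmw : mb w y ∈ ball (0:ℂ) 1 := hmbw hy
    have d2 : DifferentiableAt ℂ f (mb w y) := hd.differentiableAt (isOpen_ball.mem_nhds hmw)
    have d3 : HasDerivAt (mb (f w)) _ (f (mb w y)) :=
      hasDerivAt_mb (f w) (mb_denom_ne hfw1 (mem_ball_zero_iff.1 (hm hmw)))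
    exact ((d3.comp y ((d2.hasDerivAt.comp y d1)))).differentiableAt.differentiableWithinAt
  have hmaps : MapsTo h (ball (0:ℂ) 1) (ball (h 0) 1) := by
    rw [h0]
    exact fun y hy => hmbf (hm (hmbw hy))
  have sch : ‖deriv h 0‖ ≤ 1 := by
    simpa using Complex.norm_deriv_le_div_of_mapsTo_ball hdh (hmaps.mono_right ball_subset_closedBall) one_pos
  -- compute deriv h 0
  have d1 : HasDerivAt (mb w) ((starRingEnd ℂ) w * w - 1) 0 := by
    have := hasDerivAt_mb w (z := 0) (by simpa using mb_denom_ne hw1 (by norm_num : ‖(0:ℂ)‖ < 1))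
    simpa using this
  have d2 : HasDerivAt f (deriv f w) (mb w 0) := by
    rw [mb_zero]
    exact (hd.differentiableAt (isOpen_ball.mem_nhds hw)).hasDerivAt
  have i1 : HasDerivAt (fun y => f (mb w y)) (deriv f w * ((starRingEnd ℂ) w * w - 1)) 0 :=
    d2.comp 0 d1
  have d3 : HasDerivAt (mb (f w))
      (((starRingEnd ℂ) (f w) * f w - 1) / (1 - (starRingEnd ℂ) (f w) * f w)^2)
      ((fun y => f (mb w y)) 0) := by
    simp only [mb_zero]
    exact hasDerivAt_mb (f w) (mb_denom_ne hfw1 hfw1)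
  have total := d3.comp 0 i1
  have hder : deriv h 0 = ((starRingEnd ℂ) (f w) * f w - 1) / (1 - (starRingEnd ℂ) (f w) * f w)^2
      * (deriv f w * ((starRingEnd ℂ) w * w - 1)) := total.deriv
  -- compute norms
  have hs1 : ‖w‖^2 < 1 := by nlinarith [norm_nonneg w]
  have ht1 : ‖f w‖^2 < 1 := by nlinarith [norm_nonneg (f w)]
  have hnorm : ‖deriv h 0‖ = (1 - ‖f w‖^2) / (1 - ‖f w‖^2)^2 * (‖deriv f w‖ * (1 - ‖w‖^2)) := by
    rw [hder, norm_mul, norm_mul, norm_div, norm_pow]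
    rw [normSq'' w, normSq'' (f w)]
    have e1 : (((‖w‖^2 : ℝ) : ℂ)) - 1 = (((‖w‖^2 - 1 : ℝ)) : ℂ) := by norm_cast
    have e2 : (1 : ℂ) - ((‖f w‖^2 : ℝ) : ℂ) = (((1 - ‖f w‖^2 : ℝ)) : ℂ) := by norm_cast
    have e3 : (((‖f w‖^2 : ℝ) : ℂ)) - 1 = (((‖f w‖^2 - 1 : ℝ)) : ℂ) := by norm_cast
    rw [e1, e2, e3]
    rw [Complex.norm_real, Complex.norm_real, Complex.norm_real]
    rw [Real.norm_eq_abs, Real.norm_eq_abs, Real.norm_eq_abs]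
    rw [_root_.abs_of_nonneg (by linarith : (0:ℝ) ≤ 1 - ‖f w‖^2),
      _root_.abs_of_nonpos (by linarith : ‖f w‖^2 - 1 ≤ 0),
      _root_.abs_of_nonpos (by linarith : ‖w‖^2 - 1 ≤ 0)]
    ring
  rw [hnorm] at sch
  have htpos : 0 < 1 - ‖f w‖^2 := by linarith
  have heq : (1 - ‖f w‖^2) / (1 - ‖f w‖^2)^2 = (1 - ‖f w‖^2)⁻¹ := by
    rw [show (1 - ‖f w‖^2)^2 = (1 - ‖f w‖^2)*(1 - ‖f w‖^2) from sq _,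
      div_mul_eq_div_div, div_self htpos.ne', one_div]
  rw [heq, inv_mul_le_iff₀ htpos] at sch
  rw [mul_comm]
  nlinarith [sch]


variable {f : ℂ → ℂ}

lemma diffAt_iter (hd : DifferentiableOn ℂ f (ball 0 1))
    (hm : MapsTo f (ball 0 1) (ball 0 1)) (n : ℕ) {z : ℂ} (hz : z ∈ ball (0:ℂ) 1) :
    DifferentiableAt ℂ f^[n] z := by
  induction n with
  | zero => simpa using differentiableAt_id'
  | succ n ih =>
    rw [Function.iterate_succ']
    exact DifferentiableAt.comp z
      (hd.differentiableAt (isOpen_ball.mem_nhds ((hm.iterate n) hz))) ih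

lemma deriv_iter_succ (hd : DifferentiableOn ℂ f (ball 0 1))
    (hm : MapsTo f (ball 0 1) (ball 0 1)) (n : ℕ) {z : ℂ} (hz : z ∈ ball (0:ℂ) 1) :
    deriv f^[n+1] z = deriv f (f^[n] z) * deriv f^[n] z := by
  rw [Function.iterate_succ']
  exact deriv_comp z (hd.differentiableAt (isOpen_ball.mem_nhds ((hm.iterate n) hz)))
    (diffAt_iter hd hm n hz)

lemma iter_decay {q r : ℝ} (hq0 : 0 ≤ q) (hq1 : q ≤ 1)
    (hstep : ∀ w : ℂ, ‖w‖ ≤ r → ‖f w‖ ≤ q * ‖w‖) :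
    ∀ (n : ℕ) (z : ℂ), ‖z‖ ≤ r → ‖f^[n] z‖ ≤ q^n * ‖z‖ := by
  intro n
  induction n with
  | zero => intro z hz; simp
  | succ n ih =>
    intro z hz
    rw [Function.iterate_succ_apply']
    have h1 := ih z hz
    have hqn : q^n ≤ 1 := pow_le_one₀ hq0 hq1
    have h2 : ‖f^[n] z‖ ≤ r := by nlinarith [norm_nonneg z]
    calc ‖f (f^[n] z)‖ ≤ q * ‖f^[n] z‖ := hstep _ h2
      _ ≤ q * (q^n * ‖z‖) := by nlinarith
      _ = q^(n+1) * ‖z‖ := by ring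

lemma deriv_le_of_bound {F : ℂ → ℂ} {w : ℂ} {ε B : ℝ} (hε : 0 < ε)
    (hdF : DifferentiableOn ℂ F (ball w ε))
    (hb : ∀ w' ∈ ball w ε, ‖F w'‖ < B) :
    ‖deriv F w‖ ≤ 2 * B / ε := by
  have h2 := hb w (mem_ball_self hε)
  apply Complex.norm_deriv_le_div_of_mapsTo_ball hdF ?_ hε
  intro w' hw'
  have h1 := hb w' hw'
  apply ball_subset_closedBall
  rw [mem_ball, dist_eq_norm]
  calc ‖F w' - F w‖ ≤ ‖F w'‖ + ‖F w‖ := norm_sub_le _ _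
    _ < 2 * B := by linarith


end Thm43

open Thm43

set_option maxHeartbeats 1000000 in
/-- **Theorem 4.3.** If `(aₙ)` is bounded then `F = ∑ aₙ fⁿ` converges on `𝔻` and belongs
to the Bloch space, with `‖F‖_ℬ ≤ C sup |aₙ|` for a constant `C = C(f) > 0`. -/
theorem statement18 (f : ℂ → ℂ) (hf : IsInner f) (hf0 : f 0 = 0) (hrot : ¬ IsRotation f) :
    ∃ C : ℝ, 0 < C ∧ ∀ a : ℕ → ℂ, ∀ A : ℝ, (∀ n : ℕ, ‖a (n + 1)‖ ≤ A) →
      (∀ z ∈ ball (0:ℂ) 1, Summable fun n : ℕ => a (n + 1) * f^[n + 1] z) ∧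
      ∀ z ∈ ball (0:ℂ) 1, (1 - ‖z‖ ^ 2) * ‖deriv (seriesFun f a) z‖ ≤ C * A := by
  classical
  obtain ⟨hd, hm, -⟩ := hf
  have hball : (0:ℂ) ∈ ball (0:ℂ) 1 := mem_ball_self one_pos
  -- the divided-difference function g with f z = z * g z
  obtain ⟨g, hgdef⟩ : ∃ g : ℂ → ℂ, g = dslope f 0 := ⟨_, rfl⟩
  have hgd : DifferentiableOn ℂ g (ball (0:ℂ) 1) := by
    rw [hgdef]
    exact (Complex.differentiableOn_dslope (isOpen_ball.mem_nhds hball)).mpr hd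
  have hm0 : MapsTo f (ball 0 1) (ball (f 0) 1) := by rw [hf0]; exact hm
  have hg1 : ∀ w ∈ ball (0:ℂ) 1, ‖g w‖ ≤ 1 := fun w hw => by
    rw [hgdef]
    simpa using Complex.norm_dslope_le_div_of_mapsTo_ball hd (hm0.mono_right ball_subset_closedBall) hw
  have hfg : ∀ w : ℂ, f w = w * g w := by
    intro w
    have h := sub_smul_dslope f 0 w
    simp only [sub_zero, smul_eq_mul, hf0] at h
    rw [hgdef]
    exact h.symm
  -- strict bound by maximum modulus (uses that f is not a rotation)
  have hglt : ∀ w ∈ ball (0:ℂ) 1, ‖g w‖ < 1 := by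
    by_contra hcon
    push_neg at hcon
    obtain ⟨w, hw, hw1⟩ := hcon
    have heq : ‖g w‖ = 1 := le_antisymm (hg1 w hw) hw1
    have hmax : IsMaxOn (norm ∘ g) (ball (0:ℂ) 1) w := by
      intro y hy
      simp only [Function.comp_apply, mem_setOf_eq, heq]
      exact hg1 y hy
    have heqon := Complex.eqOn_of_isPreconnected_of_isMaxOn_norm
      (convex_ball (0:ℂ) 1).isPreconnected isOpen_ball hgd hw hmax
    refine hrot ⟨g w, heq, fun z hz => ?_⟩
    rw [hfg z, heqon hz, Function.const_apply, mul_comm]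
  obtain ⟨b, hbdef⟩ : ∃ x : ℝ, x = ‖g 0‖ := ⟨_, rfl⟩
  have hb1' : ‖g 0‖ < 1 := hglt 0 hball
  have hb1 : b < 1 := by rw [hbdef]; exact hb1'
  have hb0 : 0 ≤ b := by rw [hbdef]; exact norm_nonneg _
  -- the constants
  obtain ⟨c₂, hc2def⟩ : ∃ x : ℝ, x = (1 - b)/2 := ⟨_, rfl⟩
  obtain ⟨k, hkdef⟩ : ∃ x : ℝ, x = (1 + b)/2 := ⟨_, rfl⟩
  obtain ⟨δ, hddef⟩ : ∃ x : ℝ, x = (1 - b)/4 := ⟨_, rfl⟩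
  obtain ⟨ρ, hrdef⟩ : ∃ x : ℝ, x = (1 - b)/8 := ⟨_, rfl⟩
  obtain ⟨lam, hlamdef⟩ : ∃ x : ℝ, x = 1 + ρ^2 * c₂ := ⟨_, rfl⟩
  have hc2pos : 0 < c₂ := by rw [hc2def]; linarith
  have hc2half : c₂ ≤ 1/2 := by rw [hc2def]; linarith
  have hk0 : 0 < k := by rw [hkdef]; linarith
  have hk1 : k < 1 := by rw [hkdef]; linarith
  have hδpos : 0 < δ := by rw [hddef]; linarith
  have hδ1 : δ < 1 := by rw [hddef]; linarith
  have hρpos : 0 < ρ := by rw [hrdef]; linarith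
  have hδρ : δ = 2 * ρ := by rw [hddef, hrdef]; ring
  have hlam1 : 1 < lam := by
    rw [hlamdef]
    nlinarith [mul_pos (pow_pos hρpos 2) hc2pos]
  have hlampos : 0 < lam := by linarith
  -- the key hyperbolic estimate for g
  have hgkey : ∀ w ∈ ball (0:ℂ) 1, c₂ * (1 - ‖w‖^2) ≤ 1 - ‖g w‖^2 := by
    intro w hw
    have hw1 : ‖w‖ < 1 := mem_ball_zero_iff.1 hw
    have hgw1 : ‖g w‖ < 1 := hglt w hw
    have hd2 : DifferentiableOn ℂ (fun y => mb (g 0) (g y)) (ball (0:ℂ) 1) := by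
      intro y hy
      have h1 := (hasDerivAt_mb (g 0) (mb_denom_ne hb1' (hglt y hy))).differentiableAt
      exact (h1.comp y (hgd.differentiableAt (isOpen_ball.mem_nhds hy))).differentiableWithinAt
    have hmp : MapsTo (fun y => mb (g 0) (g y)) (ball (0:ℂ) 1)
        (ball ((fun y => mb (g 0) (g y)) 0) 1) := by
      simp only [mb_self]
      exact fun y hy => mem_ball_zero_iff.2 (norm_mb_lt_one hb1' (hglt y hy))
    have hsch := Complex.dist_le_div_mul_dist_of_mapsTo_ball hd2 (hmp.mono_right ball_subset_closedBall) hw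
    simp only [mb_self, dist_eq_norm, sub_zero] at hsch
    rw [div_self one_ne_zero, one_mul] at hsch
    -- hsch : ‖mb (g 0) (g w) - 0‖ ≤ ‖w‖ (roughly)
    have hsch' : ‖mb (g 0) (g w)‖ ≤ ‖w‖ := by simpa using hsch
    have hid := one_sub_mb_sq hb1' hgw1
    have hdpos := mb_denom_pos hb1' hgw1
    have hd2ne : ‖1 - (starRingEnd ℂ) (g 0) * (g w)‖^2 ≠ 0 := by positivity
    rw [eq_div_iff hd2ne] at hid
    have hden : 1 - b ≤ ‖1 - (starRingEnd ℂ) (g 0) * (g w)‖ := by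
      have h1 : ‖(starRingEnd ℂ) (g 0) * (g w)‖ ≤ b := by
        rw [norm_mul, RCLike.norm_conj, ← hbdef]
        nlinarith [norm_nonneg (g w), hb0]
      have h2 := norm_sub_norm_le (1 : ℂ) ((starRingEnd ℂ) (g 0) * (g w))
      rw [norm_one] at h2
      linarith
    have hP : 1 - ‖w‖^2 ≤ 1 - ‖mb (g 0) (g w)‖^2 := by
      have := pow_le_pow_left₀ (norm_nonneg _) hsch' 2
      linarith
    have hwpos : (0:ℝ) ≤ 1 - ‖w‖^2 := by nlinarith [norm_nonneg w]
    have hb2 : 0 < 1 - b^2 := by nlinarith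
    have hkey2 : (1 - ‖w‖^2) * (1-b)^2 ≤ (1 - b^2) * (1 - ‖g w‖^2) := by
      rw [← hbdef] at hid
      rw [← hid]
      have h2 : (1-b)^2 ≤ ‖1 - (starRingEnd ℂ) (g 0) * (g w)‖^2 :=
        pow_le_pow_left₀ (by linarith) hden 2
      have h3 : (0:ℝ) ≤ 1 - ‖mb (g 0) (g w)‖^2 := le_trans hwpos hP
      exact mul_le_mul hP h2 (by positivity) h3
    have hint : (0:ℝ) ≤ (1 - ‖w‖^2) * (1-b)^2 * (1-b) := by
      apply mul_nonneg (mul_nonneg hwpos (sq_nonneg _))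
      linarith
    have e1 : c₂ * (1 - ‖w‖^2) * (1 - b^2) ≤ (1 - ‖w‖^2) * (1-b)^2 := by
      rw [hc2def]; linarith [hint]
    have e2 : c₂ * (1 - ‖w‖^2) * (1 - b^2) ≤ (1 - ‖g w‖^2) * (1 - b^2) := by
      rw [mul_comm (1 - ‖g w‖^2) (1 - b^2)]
      exact le_trans e1 hkey2
    exact le_of_mul_le_mul_right (by linarith [e2]) hb2
  -- expansion estimate
  have hexp : ∀ w ∈ ball (0:ℂ) 1, (1 + ‖w‖^2 * c₂) * (1 - ‖w‖^2) ≤ 1 - ‖f w‖^2 := by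
    intro w hw
    have h1 := hgkey w hw
    have hfw : ‖f w‖^2 = ‖w‖^2 * ‖g w‖^2 := by rw [hfg w, norm_mul]; ring
    have h2 := mul_le_mul_of_nonneg_left h1 (sq_nonneg ‖w‖)
    rw [hfw]
    linarith [h2]
  -- contraction near the origin
  have hstep : ∀ w : ℂ, ‖w‖ ≤ δ → ‖f w‖ ≤ k * ‖w‖ := by
    intro w hwδ
    have hw : w ∈ ball (0:ℂ) 1 := mem_ball_zero_iff.2 (lt_of_le_of_lt hwδ hδ1)
    have hmp : MapsTo g (ball (0:ℂ) 1) (ball (g 0) 2) := by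
      intro y hy
      rw [mem_ball, dist_eq_norm]
      calc ‖g y - g 0‖ ≤ ‖g y‖ + ‖g 0‖ := norm_sub_le _ _
        _ < 2 := by have h5 := hglt y hy; linarith [hb1']
    have hsch := Complex.dist_le_div_mul_dist_of_mapsTo_ball hgd (hmp.mono_right ball_subset_closedBall) hw
    rw [dist_eq_norm, dist_eq_norm, sub_zero] at hsch
    have hgw : ‖g w‖ ≤ k := by
      have h1 := norm_sub_norm_le (g w) (g 0)
      rw [← hbdef] at h1
      rw [hkdef]
      have h2 : (2:ℝ)/1 * ‖w‖ = 2 * ‖w‖ := by ring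
      rw [h2] at hsch
      rw [hddef] at hwδ
      linarith
    calc ‖f w‖ = ‖w‖ * ‖g w‖ := by rw [hfg w, norm_mul]
      _ ≤ ‖w‖ * k := mul_le_mul_of_nonneg_left hgw (norm_nonneg w)
      _ = k * ‖w‖ := mul_comm _ _
  -- geometric contraction on sub-balls
  have hqfact : ∀ r : ℝ, 0 ≤ r → r < 1 →
      ∃ q : ℝ, 0 < q ∧ q < 1 ∧ ∀ w : ℂ, ‖w‖ ≤ r → ‖f w‖ ≤ q * ‖w‖ := by
    intro r hr0 hr1
    have hr2 : r^2 < 1 := by nlinarith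
    have harg : (0:ℝ) < 1 - c₂ * (1 - r^2) := by nlinarith
    refine ⟨Real.sqrt (1 - c₂*(1-r^2)), Real.sqrt_pos.2 harg, ?_, ?_⟩
    · rw [Real.sqrt_lt' one_pos]
      nlinarith [mul_pos hc2pos (by nlinarith : (0:ℝ) < 1 - r^2)]
    · intro w hwr
      have hw : w ∈ ball (0:ℂ) 1 := mem_ball_zero_iff.2 (lt_of_le_of_lt hwr hr1)
      have h1 := hgkey w hw
      have hsq : ‖w‖^2 ≤ r^2 := pow_le_pow_left₀ (norm_nonneg w) hwr 2
      have h2 : ‖g w‖^2 ≤ 1 - c₂*(1-r^2) := by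
        nlinarith [mul_nonneg hc2pos.le (sub_nonneg.2 hsq)]
      have h3 : ‖g w‖ ≤ Real.sqrt (1 - c₂*(1-r^2)) := by
        calc ‖g w‖ = Real.sqrt (‖g w‖^2) := (Real.sqrt_sq (norm_nonneg _)).symm
          _ ≤ Real.sqrt (1 - c₂*(1-r^2)) := Real.sqrt_le_sqrt h2
      calc ‖f w‖ = ‖w‖ * ‖g w‖ := by rw [hfg w, norm_mul]
        _ ≤ ‖w‖ * Real.sqrt (1 - c₂*(1-r^2)) := mul_le_mul_of_nonneg_left h3 (norm_nonneg w)
        _ = Real.sqrt (1 - c₂*(1-r^2)) * ‖w‖ := mul_comm _ _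
  -- remaining constants
  have hlaminv0 : (0:ℝ) ≤ lam⁻¹ := by positivity
  have hlaminv1 : lam⁻¹ < 1 := by
    rw [inv_lt_one_iff₀]
    right; exact hlam1
  obtain ⟨C₁, hC1def⟩ : ∃ x : ℝ, x = (1 - lam⁻¹)⁻¹ := ⟨_, rfl⟩
  obtain ⟨C₂, hC2def⟩ : ∃ x : ℝ, x = 4 * k * (1 - k)⁻¹ := ⟨_, rfl⟩
  have hC1pos : 0 < C₁ := by rw [hC1def]; have : 0 < 1 - lam⁻¹ := by linarith
                             positivity
  have hC2nonneg : 0 ≤ C₂ := by rw [hC2def]; have : 0 < 1 - k := by linarith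
                                positivity
  refine ⟨C₁ + C₂, by linarith, ?_⟩
  intro a A ha
  have hA0 : 0 ≤ A := le_trans (norm_nonneg _) (ha 0)
  -- summability of the series on the disc
  have hSum : ∀ z ∈ ball (0:ℂ) 1, Summable fun n : ℕ => a (n + 1) * f^[n + 1] z := by
    intro z hz
    have hz1 : ‖z‖ < 1 := mem_ball_zero_iff.1 hz
    obtain ⟨q, hq0, hq1, hqs⟩ := hqfact ‖z‖ (norm_nonneg z) hz1
    have hdecay := iter_decay (f := f) hq0.le hq1.le hqs
    apply Summable.of_norm_bounded (g := fun n => (A * ‖z‖ * q) * q^n)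
      ((summable_geometric_of_lt_one hq0.le hq1).mul_left _)
    intro n
    rw [norm_mul]
    calc ‖a (n+1)‖ * ‖f^[n+1] z‖ ≤ A * (q^(n+1) * ‖z‖) :=
        mul_le_mul (ha n) (hdecay (n+1) z le_rfl) (norm_nonneg _) hA0
      _ = (A * ‖z‖ * q) * q^n := by ring
  refine ⟨hSum, ?_⟩
  -- the Bloch-norm estimate
  intro z hz
  have hz1 : ‖z‖ < 1 := mem_ball_zero_iff.1 hz
  have h1z : (0:ℝ) < 1 - ‖z‖^2 := by nlinarith [norm_nonneg z]
  have horbit : ∀ n : ℕ, f^[n] z ∈ ball (0:ℂ) 1 := fun n => (hm.iterate n) hz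
  -- radii for the locally-uniform derivative bound
  obtain ⟨r, hrdef2⟩ : ∃ x : ℝ, x = (1 + ‖z‖)/2 := ⟨_, rfl⟩
  have hrz : ‖z‖ < r := by rw [hrdef2]; linarith
  have hr1 : r < 1 := by rw [hrdef2]; linarith
  have hr0 : 0 < r := by rw [hrdef2]; linarith [norm_nonneg z]
  obtain ⟨ε, hεdef⟩ : ∃ x : ℝ, x = (1 - r)/2 := ⟨_, rfl⟩
  obtain ⟨r', hr'def⟩ : ∃ x : ℝ, x = (1 + r)/2 := ⟨_, rfl⟩
  have hεpos : 0 < ε := by rw [hεdef]; linarith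
  have hrr' : r + ε = r' := by rw [hεdef, hr'def]; ring
  have hr'1 : r' < 1 := by rw [hr'def]; linarith
  have hr'0 : 0 < r' := by rw [hr'def]; linarith
  obtain ⟨q', hq'0, hq'1, hq's⟩ := hqfact r' (by linarith) hr'1
  -- uniform geometric derivative bound on `ball 0 r`
  have hDy : ∀ (n : ℕ) (y : ℂ), y ∈ ball (0:ℂ) r →
      ‖deriv f^[n+1] y‖ ≤ (2*(q'*r')/ε) * q'^n := by
    intro n y hy
    have hy1 : ‖y‖ < r := mem_ball_zero_iff.1 hy
    have hsub : ∀ w : ℂ, w ∈ ball y ε → ‖w‖ < r' := by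
      intro w hwb
      have h1 : ‖w - y‖ < ε := by rw [← dist_eq_norm]; exact mem_ball.1 hwb
      calc ‖w‖ = ‖w - y + y‖ := by ring_nf
        _ ≤ ‖w - y‖ + ‖y‖ := norm_add_le _ _
        _ < ε + r := by linarith
        _ = r' := by linarith [hrr']
    have hdF : DifferentiableOn ℂ f^[n+1] (ball y ε) := by
      intro w hwb
      exact (diffAt_iter hd hm (n+1)
        (mem_ball_zero_iff.2 (lt_trans (hsub w hwb) hr'1))).differentiableWithinAt
    have hbnd : ∀ w ∈ ball y ε, ‖f^[n+1] w‖ < q'^(n+1) * r' := by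
      intro w hwb
      have hw' := hsub w hwb
      calc ‖f^[n+1] w‖ ≤ q'^(n+1) * ‖w‖ := iter_decay hq'0.le hq'1.le hq's (n+1) w hw'.le
        _ < q'^(n+1) * r' := by
            exact mul_lt_mul_of_pos_left hw' (pow_pos hq'0 (n+1))
    calc ‖deriv f^[n+1] y‖ ≤ 2 * (q'^(n+1) * r') / ε := deriv_le_of_bound hεpos hdF hbnd
      _ = (2*(q'*r')/ε) * q'^n := by rw [pow_succ]; ring
  have hzr : z ∈ ball (0:ℂ) r := mem_ball_zero_iff.2 hrz
  -- term-by-term differentiation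
  have hu : Summable (fun n : ℕ => A * ((2*(q'*r')/ε) * q'^n)) :=
    (((summable_geometric_of_lt_one hq'0.le hq'1).mul_left _).mul_left _)
  have hg'b : ∀ (n : ℕ) (y : ℂ), y ∈ ball (0:ℂ) r →
      ‖a (n+1) * deriv f^[n+1] y‖ ≤ A * ((2*(q'*r')/ε) * q'^n) := by
    intro n y hy
    rw [norm_mul]
    exact mul_le_mul (ha n) (hDy n y hy) (norm_nonneg _) hA0
  have hsum0 : Summable fun n : ℕ => a (n+1) * f^[n+1] (0:ℂ) := by
    have hzero : ∀ n : ℕ, a (n+1) * f^[n+1] (0:ℂ) = 0 := fun n => by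
      rw [Function.iterate_fixed hf0, mul_zero]
    exact summable_zero.congr fun n => (hzero n).symm
  have hder := hasDerivAt_tsum_of_isPreconnected hu isOpen_ball
    (convex_ball (0:ℂ) r).isPreconnected
    (fun n y hy => ((diffAt_iter hd hm (n+1)
      (mem_ball_zero_iff.2 (lt_trans (mem_ball_zero_iff.1 hy) hr1))).hasDerivAt).const_mul
        (a (n+1)))
    hg'b (mem_ball_self hr0) hsum0 hzr
  have hFderiv : deriv (seriesFun f a) z = ∑' n : ℕ, a (n+1) * deriv f^[n+1] z :=
    HasDerivAt.deriv hder
  -- summability of the various majorants at z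
  have hnormsum : Summable (fun n : ℕ => ‖a (n+1) * deriv f^[n+1] z‖) :=
    Summable.of_nonneg_of_le (fun n => norm_nonneg _) (fun n => hg'b n z hzr) hu
  have hDn : Summable (fun n : ℕ => (1-‖z‖^2) * ‖deriv f^[n+1] z‖) := by
    apply Summable.of_nonneg_of_le (fun n => mul_nonneg h1z.le (norm_nonneg _))
      (fun n => mul_le_mul_of_nonneg_left (hDy n z hzr) h1z.le)
      (((summable_geometric_of_lt_one hq'0.le hq'1).mul_left _).mul_left _)
  -- Schwarz-Pick telescoping bound
  have hT : ∀ n : ℕ, (1-‖z‖^2) * ‖deriv f^[n] z‖ ≤ 1 - ‖f^[n] z‖^2 := by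
    intro n
    induction n with
    | zero => simp
    | succ n ih =>
      rw [deriv_iter_succ hd hm n hz, Function.iterate_succ_apply', norm_mul]
      have hsp := sp_deriv hd hm (horbit n)
      calc (1-‖z‖^2) * (‖deriv f (f^[n] z)‖ * ‖deriv f^[n] z‖)
          = ‖deriv f (f^[n] z)‖ * ((1-‖z‖^2) * ‖deriv f^[n] z‖) := by ring
        _ ≤ ‖deriv f (f^[n] z)‖ * (1 - ‖f^[n] z‖^2) :=
            mul_le_mul_of_nonneg_left ih (norm_nonneg _)
        _ = (1 - ‖f^[n] z‖^2) * ‖deriv f (f^[n] z)‖ := mul_comm _ _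
        _ ≤ 1 - ‖f (f^[n] z)‖^2 := hsp
  -- first entry time into the small ball
  have hex : ∃ n : ℕ, ‖f^[n] z‖ < ρ := by
    by_contra hcon
    push_neg at hcon
    have grow : ∀ n : ℕ, lam^n * (1 - ‖z‖^2) ≤ 1 - ‖f^[n] z‖^2 := by
      intro n
      induction n with
      | zero => simp
      | succ n ih =>
        have h1 := hexp (f^[n] z) (horbit n)
        have h2 : ρ^2 ≤ ‖f^[n] z‖^2 := pow_le_pow_left₀ hρpos.le (hcon n) 2
        have h3 : lam * (1 - ‖f^[n] z‖^2) ≤ 1 - ‖f^[n+1] z‖^2 := by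
          rw [Function.iterate_succ_apply']
          have h4 : (0:ℝ) ≤ 1 - ‖f^[n] z‖^2 := by
            nlinarith [norm_nonneg (f^[n] z), mem_ball_zero_iff.1 (horbit n)]
          have h5 : lam ≤ 1 + ‖f^[n] z‖^2 * c₂ := by
            rw [hlamdef]
            nlinarith [mul_le_mul_of_nonneg_right h2 hc2pos.le]
          calc lam * (1 - ‖f^[n] z‖^2) ≤ (1 + ‖f^[n] z‖^2 * c₂) * (1 - ‖f^[n] z‖^2) :=
              mul_le_mul_of_nonneg_right h5 h4
            _ ≤ 1 - ‖f (f^[n] z)‖^2 := h1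
        calc lam^(n+1) * (1 - ‖z‖^2) = lam * (lam^n * (1 - ‖z‖^2)) := by ring
          _ ≤ lam * (1 - ‖f^[n] z‖^2) := mul_le_mul_of_nonneg_left ih hlampos.le
          _ ≤ 1 - ‖f^[n+1] z‖^2 := h3
    obtain ⟨n, hn⟩ := pow_unbounded_of_one_lt ((1 - ‖z‖^2)⁻¹) hlam1
    have h6 := grow n
    have h7 : 1 - ‖f^[n] z‖^2 ≤ 1 := by nlinarith [sq_nonneg ‖f^[n] z‖]
    have h8 : lam^n * (1 - ‖z‖^2) ≤ 1 := le_trans h6 h7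
    have h9 : (1 - ‖z‖^2)⁻¹ * (1 - ‖z‖^2) < lam^n * (1 - ‖z‖^2) :=
      mul_lt_mul_of_pos_right hn h1z
    rw [inv_mul_cancel₀ h1z.ne'] at h9
    linarith
  set N : ℕ := Nat.find hex with hNdef
  have hN : ‖f^[N] z‖ < ρ := Nat.find_spec hex
  have hNlt : ∀ j : ℕ, j < N → ρ ≤ ‖f^[j] z‖ := fun j hj =>
    not_lt.1 (Nat.find_min hex hj)
  -- geometric expansion before time N
  have hgeom : ∀ m : ℕ, m ≤ N → lam^m * (1 - ‖f^[N-m] z‖^2) ≤ 1 := by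
    intro m
    induction m with
    | zero =>
      intro _
      simpa using (by nlinarith [sq_nonneg ‖f^[N] z‖] : 1 - ‖f^[N-0] z‖^2 ≤ 1)
    | succ m ih =>
      intro hm1
      have hmN : m ≤ N := Nat.le_of_succ_le hm1
      have hj : N - (m+1) < N := by omega
      have hjρ : ρ ≤ ‖f^[N-(m+1)] z‖ := hNlt _ hj
      have hjsucc : (N-(m+1)) + 1 = N - m := by omega
      have hwj := horbit (N-(m+1))
      have hexpj := hexp (f^[N-(m+1)] z) hwj
      have hiter : f (f^[N-(m+1)] z) = f^[N-m] z := by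
        conv_rhs => rw [← hjsucc]
        exact (Function.iterate_succ_apply' f _ z).symm
      rw [hiter] at hexpj
      have h2 : ρ^2 ≤ ‖f^[N-(m+1)] z‖^2 := pow_le_pow_left₀ hρpos.le hjρ 2
      have h4 : (0:ℝ) ≤ 1 - ‖f^[N-(m+1)] z‖^2 := by
        nlinarith [mem_ball_zero_iff.1 hwj, norm_nonneg (f^[N-(m+1)] z)]
      have h5 : lam ≤ 1 + ‖f^[N-(m+1)] z‖^2 * c₂ := by
        rw [hlamdef]
        nlinarith [mul_le_mul_of_nonneg_right h2 hc2pos.le]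
      have h1 : lam * (1 - ‖f^[N-(m+1)] z‖^2) ≤ 1 - ‖f^[N-m] z‖^2 :=
        le_trans (mul_le_mul_of_nonneg_right h5 h4) hexpj
      calc lam^(m+1) * (1 - ‖f^[N-(m+1)] z‖^2)
          = lam^m * (lam * (1 - ‖f^[N-(m+1)] z‖^2)) := by ring
        _ ≤ lam^m * (1 - ‖f^[N-m] z‖^2) :=
            mul_le_mul_of_nonneg_left h1 (pow_nonneg hlampos.le m)
        _ ≤ 1 := ih hmN
  -- head estimate
  have hhead : ∀ i : ℕ, i < N →
      (1-‖z‖^2) * ‖deriv f^[i+1] z‖ ≤ (lam⁻¹)^(N-1-i) := by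
    intro i hi
    have h1 := hT (i+1)
    have h2 := hgeom (N-(i+1)) (by omega)
    have e : N - (N-(i+1)) = i+1 := by omega
    rw [e] at h2
    have e2 : N - (i+1) = N - 1 - i := by omega
    rw [e2] at h2
    have hpow : (0:ℝ) < lam^(N-1-i) := pow_pos hlampos _
    have h3 : 1 - ‖f^[i+1] z‖^2 ≤ 1 / lam^(N-1-i) :=
      (le_div_iff₀ hpow).mpr (by linarith [h2])
    rw [one_div, ← inv_pow] at h3
    exact le_trans h1 h3
  have hsumhead : ∑ i ∈ Finset.range N, (1-‖z‖^2) * ‖deriv f^[i+1] z‖ ≤ C₁ := by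
    calc ∑ i ∈ Finset.range N, (1-‖z‖^2) * ‖deriv f^[i+1] z‖
        ≤ ∑ i ∈ Finset.range N, (lam⁻¹)^(N-1-i) :=
          Finset.sum_le_sum (fun i hi => hhead i (Finset.mem_range.1 hi))
      _ = ∑ i ∈ Finset.range N, (lam⁻¹)^i := Finset.sum_range_reflect (fun j => (lam⁻¹)^j) N
      _ ≤ ∑' i : ℕ, (lam⁻¹)^i := Summable.sum_le_tsum _ (fun i _ => pow_nonneg hlaminv0 i)
          (summable_geometric_of_lt_one hlaminv0 hlaminv1)
      _ = (1 - lam⁻¹)⁻¹ := tsum_geometric_of_lt_one hlaminv0 hlaminv1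
      _ = C₁ := hC1def.symm
  -- tail estimate
  have htail : ∀ m : ℕ, (1-‖z‖^2) * ‖deriv f^[N+m+1] z‖ ≤ 4 * k^(m+1) := by
    intro m
    have hcomp : f^[N+m+1] = f^[m+1] ∘ f^[N] := by
      rw [show N + m + 1 = (m+1) + N from by omega, Function.iterate_add]
    have hderiv : deriv f^[N+m+1] z = deriv f^[m+1] (f^[N] z) * deriv f^[N] z := by
      rw [hcomp]
      exact deriv_comp z (diffAt_iter hd hm (m+1) (horbit N)) (diffAt_iter hd hm N hz)
    have hρδ2 : ρ + ρ ≤ δ := by rw [hδρ]; linarith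
    have hsubδ : ∀ w : ℂ, w ∈ ball (f^[N] z) ρ → ‖w‖ < δ := by
      intro w hwb
      have h1 : ‖w - f^[N] z‖ < ρ := by rw [← dist_eq_norm]; exact mem_ball.1 hwb
      calc ‖w‖ = ‖w - f^[N] z + f^[N] z‖ := by ring_nf
        _ ≤ ‖w - f^[N] z‖ + ‖f^[N] z‖ := norm_add_le _ _
        _ < ρ + ρ := by linarith [hN]
        _ ≤ δ := hρδ2
    have hdF : DifferentiableOn ℂ f^[m+1] (ball (f^[N] z) ρ) := by
      intro w hwb
      exact (diffAt_iter hd hm (m+1)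
        (mem_ball_zero_iff.2 (lt_trans (hsubδ w hwb) hδ1))).differentiableWithinAt
    have hbnd : ∀ w ∈ ball (f^[N] z) ρ, ‖f^[m+1] w‖ < k^(m+1) * δ := by
      intro w hwb
      have hwδ := hsubδ w hwb
      calc ‖f^[m+1] w‖ ≤ k^(m+1) * ‖w‖ := iter_decay hk0.le hk1.le hstep (m+1) w hwδ.le
        _ < k^(m+1) * δ := mul_lt_mul_of_pos_left hwδ (pow_pos hk0 (m+1))
    have h4 : ‖deriv f^[m+1] (f^[N] z)‖ ≤ 2 * (k^(m+1) * δ) / ρ :=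
      deriv_le_of_bound hρpos hdF hbnd
    have h5 : 2 * (k^(m+1) * δ) / ρ = 4 * k^(m+1) := by
      rw [hδρ]
      field_simp
      ring
    rw [h5] at h4
    have hTN : (1-‖z‖^2) * ‖deriv f^[N] z‖ ≤ 1 := by
      linarith [hT N, sq_nonneg ‖f^[N] z‖]
    calc (1-‖z‖^2) * ‖deriv f^[N+m+1] z‖
        = ‖deriv f^[m+1] (f^[N] z)‖ * ((1-‖z‖^2) * ‖deriv f^[N] z‖) := by
          rw [hderiv, norm_mul]; ring
      _ ≤ ‖deriv f^[m+1] (f^[N] z)‖ * 1 :=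
          mul_le_mul_of_nonneg_left hTN (norm_nonneg _)
      _ = ‖deriv f^[m+1] (f^[N] z)‖ := mul_one _
      _ ≤ 4 * k^(m+1) := h4
  -- summing up
  have htailsummable : Summable (fun m : ℕ => 4 * k^(m+1)) :=
    ((summable_geometric_of_lt_one hk0.le hk1).mul_left (4*k)).congr
      (fun m => by rw [pow_succ]; ring)
  have htailsum : ∑' m : ℕ, (1-‖z‖^2) * ‖deriv f^[(m+N)+1] z‖ ≤ C₂ := by
    have hDnshift : Summable (fun m : ℕ => (1-‖z‖^2) * ‖deriv f^[(m+N)+1] z‖) :=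
      (summable_nat_add_iff (f := fun n : ℕ => (1-‖z‖^2) * ‖deriv f^[n+1] z‖) N).2 hDn
    have h1 : ∑' m : ℕ, (1-‖z‖^2) * ‖deriv f^[(m+N)+1] z‖ ≤ ∑' m : ℕ, 4 * k^(m+1) := by
      apply Summable.tsum_le_tsum _ hDnshift htailsummable
      intro m
      have h0 := htail m
      rwa [show N + m + 1 = (m+N)+1 from by omega] at h0
    have h2 : ∑' m : ℕ, (4:ℝ) * k^(m+1) = 4 * k * (1-k)⁻¹ := by
      calc ∑' m : ℕ, (4:ℝ) * k^(m+1) = ∑' m : ℕ, (4*k) * k^m :=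
          tsum_congr (fun m => by rw [pow_succ]; ring)
        _ = (4*k) * ∑' m : ℕ, k^m := tsum_mul_left
        _ = 4 * k * (1-k)⁻¹ := by rw [tsum_geometric_of_lt_one hk0.le hk1]
    rw [hC2def]
    linarith
  have hST : ∑' n : ℕ, (1-‖z‖^2) * ‖deriv f^[n+1] z‖ ≤ C₁ + C₂ := by
    have hsplit := Summable.sum_add_tsum_nat_add (f := fun n : ℕ => (1-‖z‖^2) * ‖deriv f^[n+1] z‖) N hDn
    linarith [hsumhead, htailsum, hsplit.symm.le, hsplit.le]
  -- final chain
  rw [hFderiv]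
  have hterm : ∀ n : ℕ, (1-‖z‖^2) * ‖a (n+1) * deriv f^[n+1] z‖
      ≤ A * ((1-‖z‖^2) * ‖deriv f^[n+1] z‖) := by
    intro n
    rw [norm_mul]
    calc (1-‖z‖^2) * (‖a (n+1)‖ * ‖deriv f^[n+1] z‖)
        = ‖a (n+1)‖ * ((1-‖z‖^2) * ‖deriv f^[n+1] z‖) := by ring
      _ ≤ A * ((1-‖z‖^2) * ‖deriv f^[n+1] z‖) :=
          mul_le_mul_of_nonneg_right (ha n) (mul_nonneg h1z.le (norm_nonneg _))
  calc (1 - ‖z‖^2) * ‖∑' n : ℕ, a (n+1) * deriv f^[n+1] z‖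
      ≤ (1 - ‖z‖^2) * ∑' n : ℕ, ‖a (n+1) * deriv f^[n+1] z‖ :=
        mul_le_mul_of_nonneg_left (norm_tsum_le_tsum_norm hnormsum) h1z.le
    _ = ∑' n : ℕ, (1 - ‖z‖^2) * ‖a (n+1) * deriv f^[n+1] z‖ := tsum_mul_left.symm
    _ ≤ ∑' n : ℕ, A * ((1-‖z‖^2) * ‖deriv f^[n+1] z‖) :=
        Summable.tsum_le_tsum hterm (hnormsum.mul_left _) (hDn.mul_left _)
    _ = A * ∑' n : ℕ, (1-‖z‖^2) * ‖deriv f^[n+1] z‖ := tsum_mul_left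
    _ ≤ A * (C₁ + C₂) := mul_le_mul_of_nonneg_left hST hA0
    _ = (C₁ + C₂) * A := mul_comm _ _

end
end
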